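/- A set B ⊆ ℕ admits a pair of sparseness rates if and only if B is finite or, when enumerated increasingly as b_1 < b_2 < ..., satisfies lim_{j→∞} b_{j+1}/b_j = ∞. -/

import Mathlib

open Filter Set Pointwise

open scoped Classical in
/-- Number of elements of `S` in `[1, n]`. -/
noncomputable def cnt (S : Set ℕ) (n : ℕ) : ℕ :=
  ((Finset.Icc 1 n).filter (fun x => x ∈ S)).card

/-- `S` has asymptotic density `α`. -/
def HasDensity (S : Set ℕ) (α : ℝ) : Prop :=
  Tendsto (fun n => (cnt S n : ℝ) / n) atTop (nhds α)

/-- Lower asymptotic density. -/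
noncomputable def dLow (S : Set ℕ) : ℝ := liminf (fun n => (cnt S n : ℝ) / n) atTop

/-- Upper asymptotic density. -/
noncomputable def dUpp (S : Set ℕ) : ℝ := limsup (fun n => (cnt S n : ℝ) / n) atTop

/-- Increasing enumeration of a set of naturals. -/
noncomputable def enum (B : Set ℕ) : ℕ → ℕ := Nat.nth (· ∈ B)

/-- `B` is highly sparse: finite, or consecutive-element ratios tend to infinity. -/
def HighlySparse (B : Set ℕ) : Prop :=
  B.Finite ∨ Tendsto (fun j => (enum B (j + 1) : ℝ) / enum B j) atTop atTop

/-- `(f, g)` is a pair of sparseness rates (PSR) of `B`. -/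
def IsPSR (B : Set ℕ) (f : ℕ → ℕ) (g : ℕ → ℝ) : Prop :=
  Monotone f ∧ Monotone g ∧ (∀ a, 0 ≤ g a) ∧
  Tendsto (fun a => (f a : ℝ) / a) atTop (nhds 0) ∧
  ∀ᶠ a in atTop, ∀ bt bs, bt ∈ B → bs ∈ B → f a < bt → bt < bs →
    (a : ℝ) + g a ≤ (bs : ℝ) - (bt : ℝ)

/-- Gap condition used to construct the rate `f`. -/
def GapCond (B : Set ℕ) (a m : ℕ) : Prop :=
  ∀ bt bs : ℕ, bt ∈ B → bs ∈ B → m < bt → bt < bs → (2 * a : ℝ) ≤ (bs : ℝ) - bt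

lemma key (B : Set ℕ) (hB : B.Infinite)
    (ht : Tendsto (fun j => (enum B (j + 1) : ℝ) / enum B j) atTop atTop)
    (K : ℕ) (hK : 0 < K) : ∃ m₀ : ℕ, ∀ a, GapCond B a (m₀ + a / K) := by
  classical
  obtain ⟨J, hJ⟩ := (tendsto_atTop.mp ht (3 * K)).exists_forall_of_atTop
  refine ⟨enum B J + 1, fun a bt bs hbt hbs hmbt hts => ?_⟩
  have hBi : {x | x ∈ B}.Infinite := hB
  set j := Nat.count (· ∈ B) bt with hj
  have hbtj : Nat.nth (· ∈ B) j = bt := Nat.nth_count hbt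
  have hJj : J < j := by
    rw [← Nat.nth_lt_nth hBi, hbtj]
    calc enum B J < enum B J + 1 := Nat.lt_succ_self _
    _ ≤ enum B J + 1 + a / K := Nat.le_add_right _ _
    _ < bt := hmbt
  have hratio : (3 * K : ℝ) ≤ (enum B (j + 1) : ℝ) / enum B j := hJ j hJj.le
  have hbspos : (0 : ℕ) < bt := Nat.lt_of_le_of_lt (Nat.zero_le _) hmbt
  have hbs1 : Nat.nth (· ∈ B) (j + 1) ≤ bs := by
    by_contra h
    push_neg at h
    have := Nat.le_nth_of_lt_nth_succ h hbs
    rw [hbtj] at this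
    exact absurd hts (not_lt.mpr this)
  have haK : a < bt * K := by
    have h2 : a / K < bt := lt_of_le_of_lt (Nat.le_add_left _ _) hmbt
    exact (Nat.div_lt_iff_lt_mul hK).mp h2
  have hbtR : (0 : ℝ) < bt := by exact_mod_cast hbspos
  have hjbt : enum B j = bt := hbtj
  rw [hjbt] at hratio
  have h31 : (3 * K : ℝ) * bt ≤ (enum B (j + 1) : ℝ) := (le_div_iff₀ hbtR).mp hratio
  have hbsR : (enum B (j + 1) : ℝ) ≤ bs := by exact_mod_cast hbs1
  have haR : (a : ℝ) < bt * K := by exact_mod_cast haK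
  have hKR : (1 : ℝ) ≤ K := by exact_mod_cast hK
  nlinarith [hbtR.le]

theorem stmt7 (B : Set ℕ) :
    (∃ f : ℕ → ℕ, ∃ g : ℕ → ℝ, IsPSR B f g) ↔ HighlySparse B := by
  constructor
  · rintro ⟨f, g, hf, hg, hg0, hf0, hev⟩
    by_cases hfin : B.Finite
    · exact Or.inl hfin
    · have hB : B.Infinite := hfin
      have hBi : {x | x ∈ B}.Infinite := hB
      refine Or.inr (tendsto_atTop.mpr fun M => ?_)
      obtain ⟨C, hC⟩ := exists_nat_ge M
      have h1 : ∀ᶠ a in atTop, (f a : ℝ) / a < 1 / (C + 1) :=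
        hf0.eventually_lt_const (by positivity)
      obtain ⟨A, hA⟩ := (h1.and hev).exists_forall_of_atTop
      have hjle : ∀ j : ℕ, j ≤ enum B j := fun j =>
        Nat.le_nth (fun hfn => absurd hfn hB)
      filter_upwards [eventually_ge_atTop (max A 1)] with j hj
      set bj := enum B j with hbj
      have hbjA : A ≤ bj := le_trans (le_trans (le_max_left A 1) hj) (hjle j)
      have hbj1 : 1 ≤ bj := le_trans (le_trans (le_max_right A 1) hj) (hjle j)
      set a := (C + 1) * bj with ha
      have haA : A ≤ a := le_trans hbjA (ha ▸ Nat.le_mul_of_pos_left bj (by omega))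
      obtain ⟨hlt, hcond⟩ := hA a haA
      have hapos : (0 : ℝ) < a := by
        have : 0 < a := by positivity
        exact_mod_cast this
      have haR : (a : ℝ) = ((C : ℝ) + 1) * bj := by rw [ha]; push_cast; ring
      have hfa : f a < bj := by
        rw [div_lt_iff₀ hapos, haR] at hlt
        have hC1 : (0:ℝ) < (C:ℝ) + 1 := by positivity
        rw [one_div, inv_mul_cancel_left₀ (ne_of_gt hC1)] at hlt
        exact_mod_cast hlt
      have hmem1 : bj ∈ B := Nat.nth_mem_of_infinite hBi j
      have hmem2 : enum B (j + 1) ∈ B := Nat.nth_mem_of_infinite hBi (j + 1)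
      have hlt2 : bj < enum B (j + 1) := (Nat.nth_lt_nth hBi).mpr (Nat.lt_succ_self j)
      have := hcond bj (enum B (j + 1)) hmem1 hmem2 hfa hlt2
      have hga := hg0 a
      have hbjR : (1 : ℝ) ≤ bj := by exact_mod_cast hbj1
      rw [le_div_iff₀ (by linarith)]
      nlinarith
  · rintro (hfin | ht)
    · obtain ⟨m, hm⟩ := hfin.bddAbove
      refine ⟨fun _ => m, fun _ => 0, monotone_const, monotone_const, fun _ => le_rfl,
        ?_, ?_⟩
      · exact tendsto_const_div_atTop_nhds_zero_nat (m : ℝ)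
      · filter_upwards with a bt bs hbt hbs h1 h2
        exact absurd (hm hbt) (not_le.mpr h1)
    · by_cases hfin : B.Finite
      · exfalso
        have hfs : {x | x ∈ B}.Finite := hfin
        obtain ⟨J, hJ⟩ := (tendsto_atTop.mp ht 1).exists_forall_of_atTop
        set n := max J hfs.toFinset.card with hn
        have h0 : enum B (n + 1) = 0 := Nat.nth_eq_zero.mpr (Or.inr ⟨hfs, by omega⟩)
        have h2 := hJ n (le_max_left _ _)
        rw [h0] at h2
        rw [Nat.cast_zero, zero_div] at h2
        linarith
      · have hB : B.Infinite := hfin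
        obtain ⟨m₁, hm₁⟩ := key B hB ht 1 one_pos
        refine ⟨fun a => sInf {m | GapCond B a m}, fun a => (a : ℝ), ?_, ?_, ?_, ?_, ?_⟩
        · intro a a' haa'
          apply Nat.sInf_le
          have h' : GapCond B a' (sInf {m | GapCond B a' m}) := by
            exact Nat.sInf_mem (⟨m₁ + a' / 1, hm₁ a'⟩ : {m | GapCond B a' m}.Nonempty)
          intro bt bs hbt hbs h1 h2
          refine le_trans ?_ (h' bt bs hbt hbs h1 h2)
          have : (a : ℝ) ≤ a' := by exact_mod_cast haa'
          linarith
        · exact fun x y h => Nat.mono_cast h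
        · exact fun a => by positivity
        · rw [Metric.tendsto_atTop]
          intro ε hε
          obtain ⟨K, hKgt⟩ := exists_nat_gt (2 / ε)
          have hKR : (0:ℝ) < K := lt_trans (by positivity) hKgt
          have hKpos : 0 < K := by exact_mod_cast hKR
          have hKe : 1 / (K : ℝ) < ε / 2 := by
            rw [div_lt_div_iff₀ hKR (by norm_num)]
            rw [div_lt_iff₀ hε] at hKgt
            linarith
          obtain ⟨m₀, hm₀⟩ := key B hB ht K hKpos
          have hsmall : ∀ᶠ (a : ℕ) in atTop, (m₀ : ℝ) / a < ε / 2 :=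
            (tendsto_const_div_atTop_nhds_zero_nat (m₀ : ℝ)).eventually_lt_const (by positivity)
          obtain ⟨N, hN⟩ := (hsmall.and (eventually_ge_atTop 1)).exists_forall_of_atTop
          refine ⟨N, fun a haN => ?_⟩
          obtain ⟨hsm, ha1⟩ := hN a haN
          have haR : (0:ℝ) < a := by exact_mod_cast ha1
          have hfle : sInf {m | GapCond B a m} ≤ m₀ + a / K := Nat.sInf_le (hm₀ a)
          have hfleR : ((sInf {m | GapCond B a m} : ℕ) : ℝ) ≤ (m₀ : ℝ) + (a:ℝ) / K := by
            calc ((sInf {m | GapCond B a m} : ℕ) : ℝ) ≤ ((m₀ + a / K : ℕ) : ℝ) := by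
                  exact_mod_cast hfle
            _ = (m₀ : ℝ) + ((a / K : ℕ) : ℝ) := by push_cast; ring
            _ ≤ (m₀ : ℝ) + (a:ℝ) / K := by
                  have := Nat.cast_div_le (m := a) (n := K) (α := ℝ)
                  linarith
          rw [Real.dist_eq, sub_zero, abs_of_nonneg (by positivity)]
          calc ((sInf {m | GapCond B a m} : ℕ) : ℝ) / a ≤ ((m₀ : ℝ) + (a:ℝ)/K) / a := by
                gcongr
          _ = (m₀ : ℝ)/a + ((a:ℝ)/K)/a := add_div _ _ _
          _ = (m₀ : ℝ)/a + 1/K := by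
                congr 1
                rw [div_div, mul_comm, ← div_div, div_self (ne_of_gt haR)]
          _ < ε/2 + ε/2 := by exact add_lt_add hsm hKe
          _ = ε := by ring
        · filter_upwards with a bt bs hbt hbs h1 h2
          have h' : GapCond B a (sInf {m | GapCond B a m}) := by
            exact Nat.sInf_mem (⟨m₁ + a / 1, hm₁ a⟩ : {m | GapCond B a m}.Nonempty)
          have := h' bt bs hbt hbs h1 h2
          linarith
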